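/- At d = Δ_c and λ = λ_c, the symmetric tree recursion f(x) = λ_c((βx+1)/(x+γ))^{Δ_c} satisfies: x̂ = √(γ/β) is a fixed point, f'(x̂) = 1, and f''(x̂) = 0. -/

import Mathlib

theorem stmt_12 (β γ : ℝ) (hβ : 0 < β) (hγ : 0 < γ) (h1 : 1 < β * γ) (hle : β ≤ γ) :
    (γ / β) ^ (Real.sqrt (β * γ) / (Real.sqrt (β * γ) - 1)) *
        ((β * Real.sqrt (γ / β) + 1) / (Real.sqrt (γ / β) + γ)) ^
          ((Real.sqrt (β * γ) + 1) / (Real.sqrt (β * γ) - 1)) =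
      Real.sqrt (γ / β) ∧
    deriv
        (fun x : ℝ =>
          (γ / β) ^ (Real.sqrt (β * γ) / (Real.sqrt (β * γ) - 1)) *
            ((β * x + 1) / (x + γ)) ^ ((Real.sqrt (β * γ) + 1) / (Real.sqrt (β * γ) - 1)))
        (Real.sqrt (γ / β)) = 1 ∧
    deriv
        (deriv
          (fun x : ℝ =>
            (γ / β) ^ (Real.sqrt (β * γ) / (Real.sqrt (β * γ) - 1)) *
              ((β * x + 1) / (x + γ)) ^
                ((Real.sqrt (β * γ) + 1) / (Real.sqrt (β * γ) - 1))))
        (Real.sqrt (γ / β)) = 0 := by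
  have ht : (0:ℝ) < γ / β := div_pos hγ hβ
  set s := Real.sqrt (β * γ) with hs_def
  set r := Real.sqrt (γ / β) with hr_def
  have hr : 0 < r := Real.sqrt_pos.2 ht
  have hs : 1 < s := by
    rw [hs_def, show (1:ℝ) = Real.sqrt 1 from Real.sqrt_one.symm]
    exact Real.sqrt_lt_sqrt (by norm_num) h1
  have hs1 : s - 1 ≠ 0 := by linarith
  have hs1' : s + 1 ≠ 0 := by linarith
  have hs2 : s ^ 2 = β * γ := Real.sq_sqrt (by positivity)
  have hr2 : r ^ 2 = γ / β := Real.sq_sqrt ht.le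
  have hβr : β * r = s := by
    rw [hr_def, hs_def, show β = Real.sqrt (β ^ 2) from (Real.sqrt_sq hβ.le).symm,
      ← Real.sqrt_mul (sq_nonneg β)]
    congr 1
    field_simp; rw [Real.sq_sqrt (sq_nonneg β)]
  have hrs : r * s = γ := by
    rw [hr_def, hs_def, ← Real.sqrt_mul ht.le,
      show γ / β * (β * γ) = γ ^ 2 by field_simp, Real.sqrt_sq hγ.le]
  have hrγ : r + γ = r * (s + 1) := by rw [mul_add, mul_one, hrs]; ring
  have hgr : (β * r + 1) / (r + γ) = r⁻¹ := by
    rw [hβr, hrγ]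
    field_simp
  set Δ := (s + 1) / (s - 1) with hΔ_def
  set L := (γ / β) ^ (s / (s - 1)) with hL_def
  have hL : L = r ^ (2 * (s / (s - 1))) := by
    rw [hL_def, ← hr2, ← Real.rpow_natCast r 2, ← Real.rpow_mul hr.le]
    norm_num
  have hpow : ∀ p : ℝ, r⁻¹ ^ p = r ^ (-p) := fun p => by
    rw [Real.inv_rpow hr.le, ← Real.rpow_neg hr.le]
  -- derivative of the inner rational function
  have hgD : ∀ x : ℝ, 0 < x → HasDerivAt (fun x : ℝ => (β * x + 1) / (x + γ))
      ((β * γ - 1) / (x + γ) ^ 2) x := by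
    intro x hx
    have hden : (0:ℝ) < x + γ := by linarith
    have h1 : HasDerivAt (fun x : ℝ => β * x + 1) β x := by
      simpa using ((hasDerivAt_id x).const_mul β).add_const 1
    have h2 : HasDerivAt (fun x : ℝ => x + γ) 1 x := (hasDerivAt_id x).add_const γ
    have : HasDerivAt (fun x : ℝ => (β * x + 1) / (x + γ)) _ x := h1.fun_div h2 hden.ne'
    convert this using 1
    congr 1
    ring
  have hpos : ∀ x : ℝ, 0 < x → (0:ℝ) < (β * x + 1) / (x + γ) := by
    intro x hx
    have hden : (0:ℝ) < x + γ := by linarith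
    have hnum : (0:ℝ) < β * x + 1 := by positivity
    exact div_pos hnum hden
  have hderiv : ∀ x : ℝ, 0 < x →
      HasDerivAt (fun x : ℝ => L * ((β * x + 1) / (x + γ)) ^ Δ)
        (L * ((β * γ - 1) / (x + γ) ^ 2 * Δ * ((β * x + 1) / (x + γ)) ^ (Δ - 1))) x := by
    intro x hx
    exact ((hgD x hx).rpow_const (p := Δ) (Or.inl (hpos x hx).ne')).const_mul L
  refine ⟨?_, ?_, ?_⟩
  · rw [hgr, hpow, hL, ← Real.rpow_add hr,
      show 2 * (s / (s - 1)) + -Δ = 1 by rw [hΔ_def]; field_simp; ring,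
      Real.rpow_one]
  · rw [(hderiv r hr).deriv, hgr, hpow, hrγ, ← hs2]
    have key : L * r ^ (-(Δ - 1)) = r ^ 2 := by
      rw [hL, ← Real.rpow_add hr,
        show 2 * (s / (s - 1)) + -(Δ - 1) = 2 by rw [hΔ_def]; field_simp; ring,
        show ((2:ℝ)) = ((2:ℕ):ℝ) by norm_num, Real.rpow_natCast]
    calc L * ((s ^ 2 - 1) / (r * (s + 1)) ^ 2 * Δ * r ^ (-(Δ - 1)))
        = (L * r ^ (-(Δ - 1))) * ((s ^ 2 - 1) / (r * (s + 1)) ^ 2 * Δ) := by ring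
      _ = r ^ 2 * ((s ^ 2 - 1) / (r * (s + 1)) ^ 2 * Δ) := by rw [key]
      _ = 1 := by rw [hΔ_def]; field_simp; ring
  · have hev : deriv (fun x : ℝ => L * ((β * x + 1) / (x + γ)) ^ Δ) =ᶠ[nhds r]
        (fun x : ℝ => (L * Δ * (β * γ - 1)) *
          (((β * x + 1) / (x + γ)) ^ (Δ - 1) * ((x + γ) ^ 2)⁻¹)) := by
      filter_upwards [isOpen_Ioi.mem_nhds (show r ∈ Set.Ioi (0:ℝ) from hr)] with x hx
      rw [(hderiv x hx).deriv]
      ring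
    rw [hev.deriv_eq]
    have hden : (0:ℝ) < r + γ := by linarith
    have hG := (hgD r hr).rpow_const (p := Δ - 1) (Or.inl (hpos r hr).ne')
    have hH : HasDerivAt (fun x : ℝ => ((x + γ) ^ 2)⁻¹)
        (-(2 * (r + γ)) / ((r + γ) ^ 2) ^ 2) r := by
      have h2 : HasDerivAt (fun x : ℝ => (x + γ) ^ 2) (2 * (r + γ)) r := by
        simpa using ((hasDerivAt_id r).add_const γ).fun_pow 2
      exact h2.inv (by positivity)
    have hF := (hG.fun_mul hH).const_mul (L * Δ * (β * γ - 1))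
    rw [hF.deriv]
    show (L * Δ * (β * γ - 1)) *
        ((β * γ - 1) / (r + γ) ^ 2 * (Δ - 1) * ((β * r + 1) / (r + γ)) ^ (Δ - 1 - 1) *
            ((r + γ) ^ 2)⁻¹ +
          ((β * r + 1) / (r + γ)) ^ (Δ - 1) * (-(2 * (r + γ)) / ((r + γ) ^ 2) ^ 2)) = 0
    apply mul_eq_zero_of_right
    rw [hgr, hpow, hpow, hrγ, ← hs2,
      show -(Δ - 1 - 1) = -(Δ - 1) + 1 by ring, Real.rpow_add hr, Real.rpow_one,
      show Δ - 1 = 2 / (s - 1) by rw [hΔ_def]; field_simp; ring]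
    field_simp
    ring
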